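/- Let h₀ : ℝⁿ → ℝⁿ be continuous with ⟨h₀(ξ), ξ⟩ > 0 for every ξ ≠ 0, and let φ : ℝⁿ → ℝⁿ be continuous with ⟨φ(ξ), ξ⟩ > 0 for every ξ ≠ 0 and φ(0) = 0. Then the only solution of the T-periodic problem (φ(x'))' = h₀(x), x(0)=x(T), x'(0)=x'(T), is the identically zero function x ≡ 0. -/

import Mathlib

open scoped RealInnerProductSpace

/-- If `⟨h₀(ξ),ξ⟩ > 0` and `⟨φ(ξ),ξ⟩ > 0` for `ξ ≠ 0`, with `φ(0) = 0`, then the only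
`T`-periodic solution of `(φ(x'))' = h₀(x)` is `x ≡ 0`. The equation is written in the
equivalent integrated form `φ(x'(t)) = φ(x'(0)) + ∫₀ᵗ h₀(x(τ)) dτ`. -/
theorem periodic_solution_eq_zero_of_sign_conditions (n : ℕ) (T : ℝ) (hT : 0 < T)
    (φ h₀ : EuclideanSpace ℝ (Fin n) → EuclideanSpace ℝ (Fin n))
    (hφc : Continuous φ) (hφ0 : φ 0 = 0)
    (hφpos : ∀ ξ : EuclideanSpace ℝ (Fin n), ξ ≠ 0 → 0 < ⟪φ ξ, ξ⟫)
    (hhc : Continuous h₀)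
    (hhpos : ∀ ξ : EuclideanSpace ℝ (Fin n), ξ ≠ 0 → 0 < ⟪h₀ ξ, ξ⟫)
    (x : ℝ → EuclideanSpace ℝ (Fin n)) (hx : ContDiff ℝ 1 x)
    (heq : ∀ t ∈ Set.Icc (0:ℝ) T,
      φ (deriv x t) = φ (deriv x 0) + ∫ τ in (0:ℝ)..t, h₀ (x τ))
    (hper : x 0 = x T) (hper' : deriv x 0 = deriv x T) :
    ∀ t ∈ Set.Icc (0:ℝ) T, x t = 0 := by
  have hxc : Continuous x := hx.continuous
  have hx'c : Continuous (deriv x) := hx.continuous_deriv le_rfl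
  have hxd : Differentiable ℝ x := hx.differentiable one_ne_zero
  set y : ℝ → EuclideanSpace ℝ (Fin n) := fun t => φ (deriv x t) with hy_def
  have hyc : Continuous y := hφc.comp hx'c
  have hhxc : Continuous fun τ => h₀ (x τ) := hhc.comp hxc
  -- nonnegativity of the two pointwise inner products
  have hh_nonneg : ∀ ξ : EuclideanSpace ℝ (Fin n), 0 ≤ ⟪h₀ ξ, ξ⟫ := by
    intro ξ
    by_cases hξ : ξ = 0
    · simp [hξ]
    · exact (hhpos ξ hξ).le
  have hφ_nonneg : ∀ ξ : EuclideanSpace ℝ (Fin n), 0 ≤ ⟪φ ξ, ξ⟫ := by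
    intro ξ
    by_cases hξ : ξ = 0
    · simp [hξ]
    · exact (hφpos ξ hξ).le
  -- the key scalar function
  set g : ℝ → ℝ := fun t => ⟪h₀ (x t), x t⟫ + ⟪φ (deriv x t), deriv x t⟫ with hg_def
  have hgc : Continuous g := by
    apply Continuous.add
    · exact continuous_inner.comp ((hhc.comp hxc).prodMk hxc)
    · exact continuous_inner.comp ((hφc.comp hx'c).prodMk hx'c)
  have hg_nonneg : ∀ t, 0 ≤ g t := fun t =>
    add_nonneg (hh_nonneg _) (hφ_nonneg _)
  -- y has derivative h₀ (x t) on the open interval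
  have hyderiv : ∀ t ∈ Set.Ioo (0:ℝ) T, HasDerivAt y (h₀ (x t)) t := by
    intro t ht
    have hI : HasDerivAt (fun u => φ (deriv x 0) + ∫ τ in (0:ℝ)..u, h₀ (x τ))
        (h₀ (x t)) t := by
      have := intervalIntegral.integral_hasDerivAt_right
        (hhxc.intervalIntegrable 0 t)
        (hhxc.stronglyMeasurableAtFilter _ _)
        hhxc.continuousAt
      exact this.const_add _
    apply hI.congr_of_eventuallyEq
    filter_upwards [Ioo_mem_nhds ht.1 ht.2] with u hu
    exact heq u (Set.Ioo_subset_Icc_self hu)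
  -- F t = ⟪y t, x t⟫ has derivative g t on the open interval
  set F : ℝ → ℝ := fun t => ⟪y t, x t⟫ with hF_def
  have hFc : Continuous F := continuous_inner.comp (hyc.prodMk hxc)
  have hFderiv : ∀ t ∈ Set.Ioo (0:ℝ) T, HasDerivAt F (g t) t := by
    intro t ht
    have := HasDerivAt.inner ℝ (hyderiv t ht) (hxd t).hasDerivAt
    -- derivative: ⟪y t, deriv x t⟫ + ⟪h₀ (x t), x t⟫
    have hgt : g t = ⟪y t, deriv x t⟫ + ⟪h₀ (x t), x t⟫ := by
      simp [hg_def, hy_def]; ring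
    rw [hgt]
    exact this
  -- integral of g over [0,T] is F T - F 0 = 0
  have hint : ∀ a b : ℝ, IntervalIntegrable g MeasureTheory.volume a b :=
    fun a b => hgc.intervalIntegrable a b
  have hItot : (∫ t in (0:ℝ)..T, g t) = 0 := by
    have := intervalIntegral.integral_eq_sub_of_hasDeriv_right_of_le hT.le
      hFc.continuousOn
      (fun t ht => (hFderiv t ht).hasDerivWithinAt)
      (hint 0 T)
    rw [this, hF_def]
    simp only [hy_def]
    rw [hper, hper']
    ring
  -- partial integrals vanish
  have hIpart : ∀ t ∈ Set.Icc (0:ℝ) T, (∫ τ in (0:ℝ)..t, g τ) = 0 := by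
    intro t ht
    have h1 : 0 ≤ ∫ τ in (0:ℝ)..t, g τ :=
      intervalIntegral.integral_nonneg ht.1 (fun u _ => hg_nonneg u)
    have h2 : 0 ≤ ∫ τ in t..T, g τ :=
      intervalIntegral.integral_nonneg ht.2 (fun u _ => hg_nonneg u)
    have hsplit : (∫ τ in (0:ℝ)..t, g τ) + ∫ τ in t..T, g τ = 0 := by
      rw [intervalIntegral.integral_add_adjacent_intervals (hint 0 t) (hint t T)]
      exact hItot
    linarith
  -- hence g = 0 on Ioo, by FTC
  have hg0_Ioo : Set.EqOn g 0 (Set.Ioo 0 T) := by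
    intro t ht
    have hD : HasDerivAt (fun u => ∫ τ in (0:ℝ)..u, g τ) (g t) t :=
      intervalIntegral.integral_hasDerivAt_right (hint 0 t)
        (hgc.stronglyMeasurableAtFilter _ _) hgc.continuousAt
    have hD0 : HasDerivAt (fun u => ∫ τ in (0:ℝ)..u, g τ) 0 t := by
      have hzero : HasDerivAt (fun _ : ℝ => (0:ℝ)) 0 t := hasDerivAt_const t 0
      apply hzero.congr_of_eventuallyEq
      filter_upwards [Ioo_mem_nhds ht.1 ht.2] with u hu
      exact hIpart u (Set.Ioo_subset_Icc_self hu)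
    exact hD.unique hD0
  -- extend to the closed interval by continuity
  have hg0 : Set.EqOn g 0 (Set.Icc 0 T) := by
    have := hg0_Ioo.closure hgc continuous_const
    rwa [closure_Ioo hT.ne] at this
  -- conclude x t = 0
  intro t ht
  by_contra hxt
  have h1 : 0 < ⟪h₀ (x t), x t⟫ := hhpos _ hxt
  have h2 : 0 ≤ ⟪φ (deriv x t), deriv x t⟫ := hφ_nonneg _
  have := hg0 ht
  simp only [hg_def, Pi.zero_apply] at this
  linarith
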